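/- For every k ≥ 2 and n ≥ 1, ∑_{n₁⋯n_k = n} τ(lcm(n₁,…,n_k)) = ∑_{j d₁⋯d_k = n} g_k(d₁,…,d_k) τ_{2k}(j), where g_k is the k-variable arithmetic function determined by τ(lcm(n₁,…,n_k)) = ∑_{j₁d₁ = n₁, …, j_k d_k = n_k} τ(j₁)⋯τ(j_k) g_k(d₁,…,d_k). -/

import Mathlib

open Finset Filter

noncomputable section

/-- The set of ordered `k`-tuples of positive integers with product `n`. -/
def tuplesProd (k n : ℕ) : Finset (Fin k → ℕ) :=
  (Fintype.piFinset fun _ => n.divisors).filter fun v => ∏ i, v i = n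

/-- The Piltz divisor function `τ_k`. -/
def piltz (k n : ℕ) : ℕ := (tuplesProd k n).card

lemma tuplesProd_eq {k n : ℕ} (hn : n ≠ 0) : tuplesProd k n = Nat.finMulAntidiag k n := by
  rw [Nat.finMulAntidiag_eq_piFinset_divisors_filter dvd_rfl hn]
  rfl

lemma card_finMulAntidiag_two (m : ℕ) :
    (Nat.finMulAntidiag 2 m).card = m.divisors.card :=
  calc (Nat.finMulAntidiag 2 m).card
      = ((Nat.finMulAntidiag 2 m).image (piFinTwoEquiv fun _ => ℕ)).card :=
        (Finset.card_image_of_injective _ (Equiv.injective _)).symm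
    _ = (Nat.divisorsAntidiagonal m).card := by
        rw [Nat.image_piFinTwoEquiv_finMulAntidiag]
    _ = m.divisors.card := by rw [← Nat.map_div_right_divisors, Finset.card_map]

lemma sum_prod_card_divisors {k J : ℕ} (hJ : J ≠ 0) :
    ∑ j ∈ Nat.finMulAntidiag k J, ∏ i, (j i).divisors.card
      = (Nat.finMulAntidiag (2 * k) J).card := by
  have key : ∀ j ∈ Nat.finMulAntidiag k J, ∏ i, (j i).divisors.card
      = (Fintype.piFinset fun i => Nat.finMulAntidiag 2 (j i)).card := by
    intro j _
    rw [Fintype.card_piFinset]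
    exact Finset.prod_congr rfl fun i _ => (card_finMulAntidiag_two _).symm
  rw [Finset.sum_congr rfl key, ← Finset.card_sigma]
  have e : Fin 2 × Fin k ≃ Fin (2 * k) := finProdFinEquiv
  have hprod : ∀ w : Fin (2 * k) → ℕ,
      ∏ t, w t = ∏ b : Fin k, ∏ a : Fin 2, w (e (a, b)) := by
    intro w
    rw [← Equiv.prod_comp e w, Fintype.prod_prod_type, Finset.prod_comm]
  apply Finset.card_nbij'
    (fun x => fun t => x.2 (e.symm t).2 (e.symm t).1)
    (fun w => ⟨fun b => ∏ a, w (e (a, b)), fun b a => w (e (a, b))⟩)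
  · rintro ⟨j, u⟩ hx
    rw [Finset.mem_coe, Finset.mem_sigma] at hx
    obtain ⟨hj, hu⟩ := hx
    rw [Fintype.mem_piFinset] at hu
    rw [Finset.mem_coe, Nat.mem_finMulAntidiag]
    refine ⟨?_, hJ⟩
    rw [hprod]
    calc ∏ b : Fin k, ∏ a : Fin 2, u (e.symm (e (a, b))).2 (e.symm (e (a, b))).1
        = ∏ b : Fin k, ∏ a : Fin 2, u b a := by simp
      _ = ∏ b : Fin k, j b := by
          refine Finset.prod_congr rfl fun b _ => ?_
          exact Nat.prod_eq_of_mem_finMulAntidiag (hu b)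
      _ = J := Nat.prod_eq_of_mem_finMulAntidiag hj
  · intro w hw
    rw [Finset.mem_coe, Finset.mem_sigma]
    constructor
    · rw [Nat.mem_finMulAntidiag]
      exact ⟨(hprod w).symm.trans (Nat.prod_eq_of_mem_finMulAntidiag hw), hJ⟩
    · rw [Fintype.mem_piFinset]
      intro b
      rw [Nat.mem_finMulAntidiag]
      refine ⟨rfl, ?_⟩
      dsimp only
      exact Finset.prod_ne_zero_iff.mpr
        fun a _ => Nat.ne_zero_of_mem_finMulAntidiag hw _
  · rintro ⟨j, u⟩ hx
    rw [Finset.mem_coe, Finset.mem_sigma] at hx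
    obtain ⟨hj, hu⟩ := hx
    rw [Fintype.mem_piFinset] at hu
    simp only [Equiv.symm_apply_apply]
    rw [show (fun b => ∏ a : Fin 2, u b a) = j from
      funext fun b => Nat.prod_eq_of_mem_finMulAntidiag (hu b)]
  · intro w hw
    funext t
    show w (e ((e.symm t).1, (e.symm t).2)) = w t
    rw [Prod.mk.eta, Equiv.apply_symm_apply]

def Spair (k n : ℕ) : Finset ((Fin k → ℕ) × (Fin k → ℕ)) :=
  ((Fintype.piFinset fun _ : Fin k => n.divisors) ×ˢ
    (Fintype.piFinset fun _ : Fin k => n.divisors)).filter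
    fun q => ∏ i, (q.1 i * q.2 i) = n

lemma mem_Spair {k n : ℕ} {q : (Fin k → ℕ) × (Fin k → ℕ)} :
    q ∈ Spair k n ↔ (∀ i, q.1 i ∈ n.divisors) ∧ (∀ i, q.2 i ∈ n.divisors) ∧
      ∏ i, (q.1 i * q.2 i) = n := by
  simp only [Spair, Finset.mem_filter, Finset.mem_product, Fintype.mem_piFinset, and_assoc]

set_option maxHeartbeats 1000000 in
theorem sum_tau_lcm_eq (k : ℕ) (hk : 2 ≤ k) (n : ℕ) (hn : 1 ≤ n)
    (g : (Fin k → ℕ) → ℂ)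
    (hg : ∀ v : Fin k → ℕ, (∀ i, 0 < v i) →
      ((Finset.univ.lcm v).divisors.card : ℂ) =
        ∑ d ∈ Fintype.piFinset (fun i => (v i).divisors),
          (∏ i, ((v i / d i).divisors.card : ℂ)) * g d) :
    ∑ v ∈ tuplesProd k n, ((Finset.univ.lcm v).divisors.card : ℂ) =
      ∑ p ∈ ((n.divisors ×ˢ Fintype.piFinset fun _ : Fin k => n.divisors).filter
          fun p => p.1 * ∏ i, p.2 i = n),
        g p.2 * (piltz (2 * k) p.1 : ℂ) := by
  have hn0 : n ≠ 0 := by omega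
  set T := ((n.divisors ×ˢ Fintype.piFinset fun _ : Fin k => n.divisors).filter
      fun p => p.1 * ∏ i, p.2 i = n) with hT
  have hmemT : ∀ p : ℕ × (Fin k → ℕ), p ∈ T ↔
      p.1 ∈ n.divisors ∧ (∀ i, p.2 i ∈ n.divisors) ∧ p.1 * ∏ i, p.2 i = n := by
    intro p
    simp only [hT, Finset.mem_filter, Finset.mem_product, Fintype.mem_piFinset, and_assoc]
  have hmemTuples : ∀ v : Fin k → ℕ, v ∈ tuplesProd k n ↔
      (∀ i, v i ∈ n.divisors) ∧ ∏ i, v i = n := by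
    intro v
    simp only [tuplesProd, Finset.mem_filter, Fintype.mem_piFinset]
  calc ∑ v ∈ tuplesProd k n, ((Finset.univ.lcm v).divisors.card : ℂ)
      = ∑ v ∈ tuplesProd k n, ∑ d ∈ Fintype.piFinset (fun i => (v i).divisors),
          (∏ i, ((v i / d i).divisors.card : ℂ)) * g d := by
        refine Finset.sum_congr rfl fun v hv => ?_
        refine hg v fun i => ?_
        exact Nat.pos_of_mem_divisors (((hmemTuples v).mp hv).1 i)
    _ = ∑ x ∈ (tuplesProd k n).sigma (fun v => Fintype.piFinset fun i => (v i).divisors),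
          (∏ i, ((x.1 i / x.2 i).divisors.card : ℂ)) * g x.2 :=
        Finset.sum_sigma' _ _ _
    _ = ∑ q ∈ Spair k n, (∏ i, ((q.1 i).divisors.card : ℂ)) * g q.2 := by
        refine Finset.sum_nbij' (fun x => (fun i => x.1 i / x.2 i, x.2))
          (fun q => ⟨fun i => q.1 i * q.2 i, q.2⟩) ?_ ?_ ?_ ?_ ?_
        · rintro ⟨v, d⟩ hx
          rw [Finset.mem_sigma] at hx
          obtain ⟨hv, hd⟩ := hx
          rw [hmemTuples] at hv
          rw [Fintype.mem_piFinset] at hd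
          have hdvd : ∀ i, d i ∣ v i := fun i => (Nat.mem_divisors.mp (hd i)).1
          rw [mem_Spair]
          refine ⟨fun i => ?_, fun i => ?_, ?_⟩
          · exact Nat.mem_divisors.mpr
              ⟨((Nat.div_dvd_of_dvd (hdvd i)).trans (Nat.mem_divisors.mp (hv.1 i)).1), hn0⟩
          · exact Nat.mem_divisors.mpr
              ⟨(hdvd i).trans (Nat.mem_divisors.mp (hv.1 i)).1, hn0⟩
          · calc ∏ i, (v i / d i * d i) = ∏ i, v i :=
                  Finset.prod_congr rfl fun i _ => Nat.div_mul_cancel (hdvd i)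
              _ = n := hv.2
        · intro q hq
          rw [mem_Spair] at hq
          obtain ⟨hq1, hq2, hqp⟩ := hq
          rw [Finset.mem_sigma]
          have hne : ∀ i, q.1 i * q.2 i ≠ 0 := by
            intro i
            refine ne_zero_of_dvd_ne_zero hn0 ?_
            rw [← hqp]
            exact Finset.dvd_prod_of_mem _ (Finset.mem_univ i)
          constructor
          · rw [hmemTuples]
            exact ⟨fun i => Nat.mem_divisors.mpr
              ⟨by rw [← hqp]; exact Finset.dvd_prod_of_mem _ (Finset.mem_univ i), hn0⟩, hqp⟩
          · rw [Fintype.mem_piFinset]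
            exact fun i => Nat.mem_divisors.mpr ⟨dvd_mul_left _ _, hne i⟩
        · rintro ⟨v, d⟩ hx
          rw [Finset.mem_sigma] at hx
          obtain ⟨hv, hd⟩ := hx
          rw [Fintype.mem_piFinset] at hd
          have hdvd : ∀ i, d i ∣ v i := fun i => (Nat.mem_divisors.mp (hd i)).1
          show (⟨fun i => v i / d i * d i, d⟩ : Σ _ : Fin k → ℕ, Fin k → ℕ) = ⟨v, d⟩
          rw [show (fun i => v i / d i * d i) = v from
            funext fun i => Nat.div_mul_cancel (hdvd i)]
        · intro q hq
          rw [mem_Spair] at hq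
          have hpos : ∀ i, 0 < q.2 i := fun i => Nat.pos_of_mem_divisors (hq.2.1 i)
          show (fun i => q.1 i * q.2 i / q.2 i, q.2) = q
          refine Prod.ext ?_ rfl
          funext i
          exact Nat.mul_div_cancel _ (hpos i)
        · intro x _
          rfl
    _ = ∑ x ∈ T.sigma (fun p => Nat.finMulAntidiag k p.1),
          g x.1.2 * ∏ i, ((x.2 i).divisors.card : ℂ) := by
        refine (Finset.sum_nbij' (fun x => (x.2, x.1.2))
          (fun q => ⟨(∏ i, q.1 i, q.2), q.1⟩) ?_ ?_ ?_ ?_ ?_).symm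
        · rintro ⟨⟨J, dd⟩, j⟩ hx
          rw [Finset.mem_sigma] at hx
          obtain ⟨hp, hj⟩ := hx
          rw [hmemT] at hp
          obtain ⟨hJ, hdd, hprod⟩ := hp
          rw [Nat.mem_finMulAntidiag] at hj
          rw [mem_Spair]
          refine ⟨fun i => Nat.mem_divisors.mpr ?_, hdd, ?_⟩
          · refine ⟨dvd_trans ?_ (Nat.mem_divisors.mp hJ).1, hn0⟩
            rw [← hj.1]
            exact Finset.dvd_prod_of_mem _ (Finset.mem_univ i)
          · show ∏ i, (j i * dd i) = n
            rw [Finset.prod_mul_distrib, hj.1, hprod]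
        · intro q hq
          rw [mem_Spair] at hq
          obtain ⟨hq1, hq2, hqp⟩ := hq
          rw [Finset.mem_sigma]
          have hqp' : (∏ i, q.1 i) * ∏ i, q.2 i = n := by
            rw [← Finset.prod_mul_distrib]; exact hqp
          have hprodne : (∏ i, q.1 i) ≠ 0 :=
            ne_zero_of_dvd_ne_zero hn0 ⟨∏ i, q.2 i, hqp'.symm⟩
          constructor
          · rw [hmemT]
            exact ⟨Nat.mem_divisors.mpr ⟨⟨∏ i, q.2 i, hqp'.symm⟩, hn0⟩, hq2, hqp'⟩
          · rw [Nat.mem_finMulAntidiag]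
            exact ⟨rfl, hprodne⟩
        · rintro ⟨⟨J, dd⟩, j⟩ hx
          rw [Finset.mem_sigma] at hx
          obtain ⟨hp, hj⟩ := hx
          rw [Nat.mem_finMulAntidiag] at hj
          show (⟨(∏ i, j i, dd), j⟩ : Σ _ : ℕ × (Fin k → ℕ), Fin k → ℕ) = ⟨(J, dd), j⟩
          rw [hj.1]
        · intro q _
          show ((q.1, q.2) : (Fin k → ℕ) × (Fin k → ℕ)) = q
          exact Prod.mk.eta
        · rintro ⟨⟨J, dd⟩, j⟩ _
          exact mul_comm _ _
    _ = ∑ p ∈ T, ∑ j ∈ Nat.finMulAntidiag k p.1,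
          g p.2 * ∏ i, ((j i).divisors.card : ℂ) :=
        (Finset.sum_sigma' T (fun p => Nat.finMulAntidiag k p.1)
          (fun p j => g p.2 * ∏ i, ((j i).divisors.card : ℂ))).symm
    _ = ∑ p ∈ T, g p.2 * (piltz (2 * k) p.1 : ℂ) := by
        refine Finset.sum_congr rfl fun p hp => ?_
        rw [hmemT] at hp
        have hp1 : p.1 ≠ 0 := Nat.pos_of_mem_divisors hp.1 |>.ne'
        rw [← Finset.mul_sum]
        congr 1
        rw [piltz, tuplesProd_eq hp1, ← sum_prod_card_divisors hp1]
        push_cast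
        rfl
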